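/- Let γ : [0,1] → M be a smooth path in a contact manifold with contact form λ, let H = H(t,x) be a time-dependent contact Hamiltonian with flow ψ_H^t, and set φ_H^t = ψ_H^t ∘ (ψ_H^1)^{-1}. Define the gauge-transformed path γ̄(t) = (φ_H^t)^{-1}(γ(t)). Then the perturbed action equals the unperturbed action of the transformed path: ∫_0^1 e^{g_{(φ_H^t)^{-1}}(γ(t))} (γ*λ + H(t,γ(t)) dt) = ∫_0^1 γ̄*λ. -/

import Mathlib

open scoped Manifold

theorem curve_split_aux
    {E : Type*} [NormedAddCommGroup E] [NormedSpace ℝ E]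
    {H' : Type*} [TopologicalSpace H'] {I : ModelWithCorners ℝ E H'}
    {M : Type*} [TopologicalSpace M] [ChartedSpace H' M] [IsManifold I (⊤ : ℕ∞) M]
    (F : ℝ × M → M) (hF : ContMDiff (𝓘(ℝ, ℝ).prod I) I (⊤ : ℕ∞) F)
    (c : ℝ → M) (hc : ContMDiff 𝓘(ℝ, ℝ) I (⊤ : ℕ∞) c) (t : ℝ) :
    mfderiv 𝓘(ℝ, ℝ) I (fun s => F (s, c s)) t (1 : ℝ)
      = mfderiv 𝓘(ℝ, ℝ) I (fun s => F (s, c t)) t (1 : ℝ)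
        + mfderiv I I (fun y => F (t, y)) (c t) (mfderiv 𝓘(ℝ, ℝ) I c t (1 : ℝ)) := by
  have hc' : MDifferentiableAt 𝓘(ℝ, ℝ) I c t := hc.mdifferentiableAt (by simp)
  have h1 : MDifferentiableAt 𝓘(ℝ, ℝ) (𝓘(ℝ, ℝ).prod I) (fun s => (s, c s)) t :=
    mdifferentiableAt_id.prodMk hc'
  have h2 : MDifferentiableAt (𝓘(ℝ, ℝ).prod I) I F (t, c t) := hF.mdifferentiableAt (by simp)
  have key : mfderiv 𝓘(ℝ, ℝ) I (fun s => F (s, c s)) t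
      = (mfderiv (𝓘(ℝ, ℝ).prod I) I F (t, c t)).comp
          (mfderiv 𝓘(ℝ, ℝ) (𝓘(ℝ, ℝ).prod I) (fun s => (s, c s)) t) :=
    mfderiv_comp t h2 h1
  have h3 : (mfderiv 𝓘(ℝ, ℝ) (𝓘(ℝ, ℝ).prod I) (fun s => (s, c s)) t) (1 : ℝ)
      = ((1 : ℝ), mfderiv 𝓘(ℝ, ℝ) I c t (1 : ℝ)) := by
    rw [show (fun s : ℝ => (s, c s)) = fun s => (id s, c s) from rfl,
      MDifferentiableAt.mfderiv_prod mdifferentiableAt_id hc']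
    rw [mfderiv_id]; rfl
  rw [key]
  show (mfderiv (𝓘(ℝ, ℝ).prod I) I F (t, c t)) ((mfderiv 𝓘(ℝ, ℝ) (𝓘(ℝ, ℝ).prod I) (fun s => (s, c s)) t) (1 : ℝ)) = _
  rw [h3]
  exact mfderiv_prod_eq_add_apply h2

theorem perturbed_action_eq_action_of_gauge_transform
    {E : Type*} [NormedAddCommGroup E] [NormedSpace ℝ E]
    {H' : Type*} [TopologicalSpace H'] {I : ModelWithCorners ℝ E H'}
    {M : Type*} [TopologicalSpace M] [ChartedSpace H' M] [IsManifold I (⊤ : ℕ∞) M]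
    (lam : (x : M) → TangentSpace I x →L[ℝ] ℝ)
    (Hf : ℝ → M → ℝ)
    (X : ℝ → (x : M) → TangentSpace I x)
    (ψ : ℝ → M ≃ M)
    (hψ0 : ψ 0 = Equiv.refl M)
    (hψsmooth : ContMDiff (𝓘(ℝ, ℝ).prod I) I (⊤ : ℕ∞) fun p : ℝ × M => ψ p.1 p.2)
    (hψsmooth' : ContMDiff (𝓘(ℝ, ℝ).prod I) I (⊤ : ℕ∞) fun p : ℝ × M => (ψ p.1).symm p.2)
    (hψflow : ∀ (p : M) (t : ℝ),
      mfderiv 𝓘(ℝ, ℝ) I (fun s => ψ s p) t (1 : ℝ) = X t (ψ t p))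
    (hHam : ∀ (t : ℝ) (x : M), lam x (X t x) = - Hf t x)
    (φ : ℝ → M ≃ M) (hφ : ∀ t, φ t = (ψ 1).symm.trans (ψ t))
    (g : ℝ → M → ℝ)
    (hg : ∀ (t : ℝ) (x : M) (v : TangentSpace I x),
      lam ((φ t).symm x) (mfderiv I I ((φ t).symm : M → M) x v)
        = Real.exp (g t x) * lam x v)
    (γ : ℝ → M) (hγ : ContMDiff 𝓘(ℝ, ℝ) I (⊤ : ℕ∞) γ)
    (γbar : ℝ → M) (hγbar : ∀ t, γbar t = (φ t).symm (γ t)) :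
    ∫ t in (0:ℝ)..1,
        Real.exp (g t (γ t)) *
          (lam (γ t) (mfderiv 𝓘(ℝ, ℝ) I γ t (1 : ℝ)) + Hf t (γ t))
      = ∫ t in (0:ℝ)..1, lam (γbar t) (mfderiv 𝓘(ℝ, ℝ) I γbar t (1 : ℝ)) := by
  -- smoothness of the time-`s` maps
  have hψs : ∀ s : ℝ, ContMDiff I I (⊤ : ℕ∞) (fun y : M => ψ s y) := fun s =>
    hψsmooth.comp (contMDiff_const.prodMk contMDiff_id)
  have hψs' : ∀ s : ℝ, ContMDiff I I (⊤ : ℕ∞) (fun y : M => (ψ s).symm y) := fun s =>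
    hψsmooth'.comp (contMDiff_const.prodMk contMDiff_id)
  have hφsymm_fun : ∀ s : ℝ, ((φ s).symm : M → M) = fun y => ψ 1 ((ψ s).symm y) := by
    intro s; rw [hφ s]; rfl
  have hg' : ∀ (t : ℝ) (x : M) (v : TangentSpace I x),
      lam ((φ t).symm x) (mfderiv I I (fun y => (φ t).symm y) x v)
        = Real.exp (g t x) * lam x v := hg
  have hφsmooth2 : ContMDiff (𝓘(ℝ, ℝ).prod I) I (⊤ : ℕ∞) (fun p : ℝ × M => (φ p.1).symm p.2) := by
    have hfun : (fun p : ℝ × M => (φ p.1).symm p.2)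
        = (fun y : M => ψ 1 y) ∘ (fun p : ℝ × M => (ψ p.1).symm p.2) := by
      funext p; rw [hφsymm_fun p.1]; rfl
    rw [hfun]; exact (hψs 1).comp hψsmooth'
  have main : ∀ t : ℝ,
      Real.exp (g t (γ t)) *
          (lam (γ t) (mfderiv 𝓘(ℝ, ℝ) I γ t (1 : ℝ)) + Hf t (γ t))
        = lam (γbar t) (mfderiv 𝓘(ℝ, ℝ) I γbar t (1 : ℝ)) := by
    intro t
    set x := γ t with hxdef
    have hcw : ContMDiff 𝓘(ℝ, ℝ) I (⊤ : ℕ∞) (fun s => (ψ s).symm x) :=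
      hψsmooth'.comp (contMDiff_id.prodMk contMDiff_const)
    -- split of the derivative of s ↦ ψ s ((ψ s).symm x)
    have split1 : mfderiv 𝓘(ℝ, ℝ) I (fun s => ψ s ((ψ s).symm x)) t (1 : ℝ)
        = mfderiv 𝓘(ℝ, ℝ) I (fun s => ψ s ((ψ t).symm x)) t (1 : ℝ)
          + mfderiv I I (fun y => ψ t y) ((ψ t).symm x)
              (mfderiv 𝓘(ℝ, ℝ) I (fun s => (ψ s).symm x) t (1 : ℝ)) :=
      curve_split_aux _ hψsmooth _ hcw t
    have hconstmf : mfderiv 𝓘(ℝ, ℝ) I (fun s => ψ s ((ψ s).symm x)) t (1 : ℝ) = 0 := by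
      have hfun : (fun s => ψ s ((ψ s).symm x)) = fun _ : ℝ => x :=
        funext fun s => (ψ s).apply_symm_apply x
      rw [hfun, mfderiv_const]; rfl
    have hflow1 : mfderiv 𝓘(ℝ, ℝ) I (fun s => ψ s ((ψ t).symm x)) t (1 : ℝ) = X t x := by
      rw [hψflow ((ψ t).symm x) t]
      congr 1
      exact (ψ t).apply_symm_apply x
    have e1 : mfderiv I I (fun y => ψ t y) ((ψ t).symm x)
        (mfderiv 𝓘(ℝ, ℝ) I (fun s => (ψ s).symm x) t (1 : ℝ)) = - X t x := by
      rw [hconstmf, hflow1] at split1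
      exact eq_neg_of_add_eq_zero_right split1.symm
    -- the derivative of ψ t has a left inverse, the derivative of (ψ t).symm
    have hcomp : mfderiv I I ((fun y => (ψ t).symm y) ∘ (fun y => ψ t y)) ((ψ t).symm x)
        = (mfderiv I I (fun y => (ψ t).symm y) (ψ t ((ψ t).symm x))).comp
            (mfderiv I I (fun y => ψ t y) ((ψ t).symm x)) :=
      mfderiv_comp _ ((hψs' t).mdifferentiableAt (by simp)) ((hψs t).mdifferentiableAt (by simp))
    have hid : ((fun y => (ψ t).symm y) ∘ (fun y => ψ t y)) = (id : M → M) :=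
      funext fun y => (ψ t).symm_apply_apply y
    rw [hid, mfderiv_id, (ψ t).apply_symm_apply] at hcomp
    have e2 : mfderiv 𝓘(ℝ, ℝ) I (fun s => (ψ s).symm x) t (1 : ℝ)
        = mfderiv I I (fun y => (ψ t).symm y) x (- X t x) := by
      conv_lhs => rw [show mfderiv 𝓘(ℝ, ℝ) I (fun s => (ψ s).symm x) t (1 : ℝ)
          = (ContinuousLinearMap.id ℝ (TangentSpace I ((ψ t).symm x)))
              (mfderiv 𝓘(ℝ, ℝ) I (fun s => (ψ s).symm x) t (1 : ℝ)) from rfl, hcomp]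
      exact congrArg _ e1
    -- derivative of (φ t).symm as a composition
    have hφcomp : mfderiv I I (fun y => (φ t).symm y) x
        = (mfderiv I I (fun y => ψ 1 y) ((ψ t).symm x)).comp
            (mfderiv I I (fun y => (ψ t).symm y) x) := by
      have hfun : (fun y => (φ t).symm y) = (fun y : M => ψ 1 y) ∘ (fun y => (ψ t).symm y) := by
        funext y; rw [hφsymm_fun t]; rfl
      rw [hfun]
      exact mfderiv_comp _ ((hψs 1).mdifferentiableAt (by simp))
        ((hψs' t).mdifferentiableAt (by simp))
    -- the time part of the derivative of the gauge transformed curve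
    have hTcomp : mfderiv 𝓘(ℝ, ℝ) I ((fun y : M => ψ 1 y) ∘ (fun s => (ψ s).symm x)) t
        = (mfderiv I I (fun y : M => ψ 1 y) ((ψ t).symm x)).comp
            (mfderiv 𝓘(ℝ, ℝ) I (fun s => (ψ s).symm x) t) :=
      mfderiv_comp t ((hψs 1).mdifferentiableAt (by simp)) (hcw.mdifferentiableAt (by simp))
    have T : mfderiv 𝓘(ℝ, ℝ) I (fun s => (φ s).symm x) t (1 : ℝ)
        = mfderiv I I (fun y => (φ t).symm y) x (- X t x) := by
      have hfun : (fun s => (φ s).symm x) = (fun y : M => ψ 1 y) ∘ (fun s => (ψ s).symm x) := by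
        funext s; rw [hφsymm_fun s]; rfl
      rw [hfun, hTcomp, hφcomp]
      exact congrArg _ e2
    have hT : lam ((φ t).symm x) (mfderiv 𝓘(ℝ, ℝ) I (fun s => (φ s).symm x) t (1 : ℝ))
        = Real.exp (g t x) * Hf t x := by
      rw [T, hg' t x (- X t x), (lam x).map_neg, hHam, neg_neg]
    have hS := hg' t x (mfderiv 𝓘(ℝ, ℝ) I γ t (1 : ℝ))
    -- split of the derivative of the gauge-transformed curve
    have split2 : mfderiv 𝓘(ℝ, ℝ) I (fun s => (φ s).symm (γ s)) t (1 : ℝ)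
        = mfderiv 𝓘(ℝ, ℝ) I (fun s => (φ s).symm x) t (1 : ℝ)
          + mfderiv I I (fun y => (φ t).symm y) x (mfderiv 𝓘(ℝ, ℝ) I γ t (1 : ℝ)) :=
      curve_split_aux _ hφsmooth2 _ hγ t
    have hγbarfun : γbar = fun s => (φ s).symm (γ s) := funext hγbar
    have hγb2 : lam (γbar t) (mfderiv 𝓘(ℝ, ℝ) I γbar t (1 : ℝ))
        = lam ((φ t).symm x) (mfderiv 𝓘(ℝ, ℝ) I (fun s => (φ s).symm (γ s)) t (1 : ℝ)) := by
      rw [hγbarfun]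
    rw [hγb2, split2, (lam ((φ t).symm x)).map_add, hT, hS]
    ring
  exact intervalIntegral.integral_congr fun t _ => main t
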